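/- A small category C is Cauchy complete (every idempotent splits) if and only if the externally tiny objects of Psh(C) are exactly the representable presheaves. -/

import Mathlib

open CategoryTheory Limits Opposite

universe u

universe w w' v₁ v₂ u₁ u₂ vj uj

section Retract

variable {D : Type u₁} [Category.{v₁} D] {E : Type u₂} [Category.{v₂} E]
variable {G H : D ⥤ E} (α : H ⟶ G) (β : G ⟶ H) {J : Type uj} [Category.{vj} J] {F : J ⥤ D}

/-- Transfer a cocone over `F ⋙ H` to a cocone over `F ⋙ G` along `β : G ⟶ H`. -/
@[simps]
def coconeOfRetract (s : Cocone (F ⋙ H)) : Cocone (F ⋙ G) where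
  pt := s.pt
  ι :=
    { app := fun j => β.app (F.obj j) ≫ s.ι.app j
      naturality := fun j j' f => by
        dsimp
        rw [Category.comp_id, ← Category.assoc, β.naturality, Category.assoc]
        congr 1
        exact s.w f }

/-- If `H` is a retract of `G` (in the functor category) and `G.mapCocone c` is a colimit,
then so is `H.mapCocone c`. -/
noncomputable def isColimitMapCoconeOfRetract (hαβ : α ≫ β = 𝟙 H) {c : Cocone F}
    (hGc : IsColimit (G.mapCocone c)) : IsColimit (H.mapCocone c) := by
  have hαβ' : ∀ Z : D, α.app Z ≫ β.app Z = 𝟙 (H.obj Z) := fun Z => by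
    rw [← NatTrans.comp_app, hαβ]; rfl
  refine
    { desc := fun s => α.app c.pt ≫ hGc.desc (coconeOfRetract β s)
      fac := fun s j => ?_
      uniq := fun s m hm => ?_ }
  · have key : G.map (c.ι.app j) ≫ hGc.desc (coconeOfRetract β s) =
        β.app (F.obj j) ≫ s.ι.app j := hGc.fac (coconeOfRetract β s) j
    dsimp
    erw [← Category.assoc, α.naturality, Category.assoc, key, ← Category.assoc, hαβ',
      Category.id_comp]
  · have hβm : β.app c.pt ≫ m = hGc.desc (coconeOfRetract β s) :=
      hGc.uniq (coconeOfRetract β s) (β.app c.pt ≫ m) fun j => by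
        dsimp
        erw [← Category.assoc, β.naturality, Category.assoc]
        exact congrArg _ (hm j)
    erw [← hβm, ← Category.assoc, hαβ']
    exact (Category.id_comp m).symm

/-- A retract (in the functor category) of a colimit-preserving functor preserves colimits. -/
lemma preservesColimits_of_retract (hαβ : α ≫ β = 𝟙 H)
    [PreservesColimitsOfSize.{w, w'} G] : PreservesColimitsOfSize.{w, w'} H := by
  constructor
  intro J' _
  constructor
  intro F'
  constructor
  intro c hc
  exact ⟨isColimitMapCoconeOfRetract α β hαβ (isColimitOfPreserves G hc)⟩

end Retract

section Tiny

variable {C : Type u} [SmallCategory C]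

/-- `Hom(yA, -)` is naturally isomorphic to evaluation at `A`. -/
noncomputable def coyonedaYonedaIsoEvaluation (A : C) :
    coyoneda.obj (op (yoneda.obj A)) ≅ (evaluation Cᵒᵖ (Type u)).obj (op A) :=
  NatIso.ofComponents (fun F => Equiv.toIso yonedaEquiv)
    (fun {F G} η => by
      ext f
      exact yonedaEquiv_comp f η)

/-- Representable presheaves are tiny. -/
lemma preservesColimits_coyoneda_yoneda (A : C) :
    PreservesColimits (coyoneda.obj (op (yoneda.obj A))) :=
  preservesColimits_of_natIso (coyonedaYonedaIsoEvaluation A).symm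

end Tiny

/-- A small category `C` is Cauchy complete (every idempotent splits) if and only if the
externally tiny objects of `Psh(C)` (presheaves `X` such that `Hom(X, -)` preserves all colimits)
are exactly the representable presheaves. -/
theorem isIdempotentComplete_iff_tiny_eq_representable (C : Type u) [SmallCategory C] :
    IsIdempotentComplete C ↔
      ∀ X : Cᵒᵖ ⥤ Type u,
        (Nonempty (PreservesColimits (coyoneda.obj (op X))) ↔ X.IsRepresentable) := by
  constructor
  · intro hC X
    constructor
    · rintro ⟨hX⟩
      -- `X` is a colimit of representables; `Hom(X, -)` preserves this colimit, so `𝟙 X`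
      -- factors through one of the legs and `X` is a retract of a representable.
      haveI := hX
      let c := Presheaf.coconeOfRepresentable X
      have hc : IsColimit ((coyoneda.obj (op X)).mapCocone c) :=
        isColimitOfPreserves _ (Presheaf.colimitOfRepresentable X)
      obtain ⟨j, g, hg⟩ := Types.jointly_surjective _ hc (𝟙 X)
      have hg' : g ≫ c.ι.app j = 𝟙 X := hg
      set A := ((CategoryOfElements.π X).leftOp.obj j) with hA
      let ℓ : yoneda.obj A ⟶ X := (uliftYonedaIsoYoneda.app A).inv ≫ c.ι.app j
      let g' : X ⟶ yoneda.obj A := g ≫ (uliftYonedaIsoYoneda.app A).hom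
      have hgl : g' ≫ ℓ = 𝟙 X := by
        simp only [g', ℓ, Category.assoc, Iso.hom_inv_id_assoc]; exact hg'
      let p : A ⟶ A := yoneda.preimage (ℓ ≫ g')
      have hyp : yoneda.map p = ℓ ≫ g' := yoneda.map_preimage _
      have hp : p ≫ p = p := by
        apply yoneda.map_injective
        rw [CategoryTheory.Functor.map_comp, hyp]
        rw [Category.assoc, ← Category.assoc g' ℓ, hgl, Category.id_comp]
      obtain ⟨Y, i, e, h1, h2⟩ := hC.idempotents_split A p hp
      refine Functor.IsRepresentable.mk' (X := Y)
        ⟨yoneda.map i ≫ ℓ, g' ≫ yoneda.map e, ?_, ?_⟩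
      · have hipe : i ≫ p ≫ e = 𝟙 Y := by
          rw [← h2]
          simp only [← Category.assoc]
          rw [h1, Category.id_comp, h1]
        rw [Category.assoc, ← Category.assoc ℓ g', ← hyp, ← CategoryTheory.Functor.map_comp,
          ← CategoryTheory.Functor.map_comp, hipe, CategoryTheory.Functor.map_id]
      · rw [Category.assoc, ← Category.assoc (yoneda.map e), ← CategoryTheory.Functor.map_comp, h2, hyp]
        simp only [← Category.assoc]
        rw [hgl, Category.id_comp, hgl]
    · intro hrep
      haveI := hrep
      haveI := preservesColimits_coyoneda_yoneda (X.reprX)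
      exact ⟨preservesColimits_of_natIso (coyoneda.mapIso X.reprW.op).symm⟩
  · intro h
    constructor
    intro A p hp
    -- split `yoneda.map p` in presheaves
    haveI : IsIdempotentComplete (Type u) :=
      (Idempotents.isIdempotentComplete_iff_hasEqualizer_of_id_and_idempotent _).2
        (fun _ _ _ => inferInstance)
    obtain ⟨Y, i, e, h1, h2⟩ :=
      IsIdempotentComplete.idempotents_split (yoneda.obj A) (yoneda.map p)
        (by rw [← CategoryTheory.Functor.map_comp, hp])
    haveI := preservesColimits_coyoneda_yoneda (C := C) A
    haveI : PreservesColimits (coyoneda.obj (op Y)) :=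
      preservesColimits_of_retract (coyoneda.map e.op) (coyoneda.map i.op)
        (by rw [← CategoryTheory.Functor.map_comp, ← op_comp, h1, op_id, CategoryTheory.Functor.map_id])
    have hrep : Y.IsRepresentable := (h Y).mp ⟨this⟩
    haveI := hrep
    refine ⟨Y.reprX, yoneda.preimage (Y.reprW.hom ≫ i), yoneda.preimage (e ≫ Y.reprW.inv), ?_, ?_⟩
    · apply yoneda.map_injective
      rw [CategoryTheory.Functor.map_comp, yoneda.map_preimage, yoneda.map_preimage, CategoryTheory.Functor.map_id]
      rw [Category.assoc, ← Category.assoc i e, h1, Category.id_comp, Iso.hom_inv_id]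
    · apply yoneda.map_injective
      rw [CategoryTheory.Functor.map_comp, yoneda.map_preimage, yoneda.map_preimage]
      rw [Category.assoc, ← Category.assoc Y.reprW.inv, Iso.inv_hom_id, Category.id_comp, h2]
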